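/- Let n ≥ 8 and let a_1, …, a_s, b_1, …, b_t ≥ 4 be integers with Σ a_i = ⌊n/2⌋ and Σ b_j = ⌈n/2⌉. Let C_{a_i} and C_{b_j} be cycles on disjoint vertex sets of the indicated lengths, and let Δ = ⋃_{i,j} (C_{a_i} * C_{b_j}). Then Δ is a flag 3-dimensional Eulerian complex on n vertices with f_1(Δ) = ⌊n²/4⌋ + n. -/

import Mathlib

open Finset

/-- An abstract simplicial complex on vertex type `V`, given by a finite,
downward-closed family of finite faces containing the empty face. -/
structure SC (V : Type*) [DecidableEq V] where
  faces : Finset (Finset V)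
  empty_mem : ∅ ∈ faces
  down_closed : ∀ ⦃σ τ : Finset V⦄, σ ∈ faces → τ ⊆ σ → τ ∈ faces

namespace SC

variable {V : Type*} [DecidableEq V]

/-- The vertex set of a complex. -/
def vertexSet (Δ : SC V) : Finset V := Δ.faces.sup id

/-- `fNum Δ i` is the number of `i`-dimensional faces (faces of cardinality `i+1`). -/
def fNum (Δ : SC V) (i : ℕ) : ℕ := (Δ.faces.filter fun σ => σ.card = i + 1).card

/-- A complex is flag if it is the clique complex of its graph, i.e. every set of
vertices which is pairwise joined by edges is a face (equivalently, all minimal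
non-faces have cardinality two). -/
def IsFlag (Δ : SC V) : Prop :=
  ∀ σ : Finset V, (∀ u ∈ σ, ∀ v ∈ σ, ({u, v} : Finset V) ∈ Δ.faces) → σ ∈ Δ.faces

/-- The restriction `Δ[W]` of `Δ` to a set `W` of vertices. -/
def restrict (Δ : SC V) (W : Finset V) : SC V where
  faces := Δ.faces.filter fun σ => σ ⊆ W
  empty_mem := by simp [Δ.empty_mem]
  down_closed := by
    intro σ τ hσ hτ
    simp only [mem_filter] at hσ ⊢
    exact ⟨Δ.down_closed hσ.1 hτ, hτ.trans hσ.2⟩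

/-- The link of a face `σ` in `Δ`. -/
def link (Δ : SC V) (σ : Finset V) : SC V where
  faces := insert ∅ (Δ.faces.filter fun τ => Disjoint τ σ ∧ τ ∪ σ ∈ Δ.faces)
  empty_mem := mem_insert_self _ _
  down_closed := by
    intro τ ρ hτ hρ
    rcases mem_insert.1 hτ with h | h
    · subst h
      simp [Finset.subset_empty.1 hρ]
    · simp only [mem_filter] at h
      refine mem_insert.2 (Or.inr ?_)
      simp only [mem_filter]
      exact ⟨Δ.down_closed h.1 hρ, h.2.1.mono_left hρ,
        Δ.down_closed h.2.2 (Finset.union_subset_union hρ Finset.Subset.rfl)⟩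

/-- A facet is a maximal face. -/
def IsFacet (Δ : SC V) (σ : Finset V) : Prop :=
  σ ∈ Δ.faces ∧ ∀ τ ∈ Δ.faces, σ ⊆ τ → σ = τ

/-- `Δ` is pure of dimension `D`: all faces have dimension at most `D` and all
facets have dimension exactly `D`. -/
def Pure (Δ : SC V) (D : ℕ) : Prop :=
  (∀ σ ∈ Δ.faces, σ.card ≤ D + 1) ∧ (∃ σ ∈ Δ.faces, σ.card = D + 1) ∧
    ∀ σ : Finset V, Δ.IsFacet σ → σ.card = D + 1

/-- The graph (1-skeleton) of a complex. -/
def graph (Δ : SC V) : SimpleGraph V where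
  Adj u v := u ≠ v ∧ ({u, v} : Finset V) ∈ Δ.faces
  symm := by
    refine ⟨fun u v h => ?_⟩
    exact ⟨h.1.symm, by rw [Finset.pair_comm]; exact h.2⟩
  loopless := by refine ⟨fun u h => ?_⟩; exact h.1 rfl

/-- A complex is connected if its vertex set is nonempty and any two vertices are
joined by a path in its graph. -/
def Connected (Δ : SC V) : Prop :=
  Δ.vertexSet.Nonempty ∧ ∀ u ∈ Δ.vertexSet, ∀ v ∈ Δ.vertexSet, Δ.graph.Reachable u v

/-- The reduced Euler characteristic `χ̃(Δ) = -1 + f₀ - f₁ + f₂ - ⋯`. -/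
def redChar (Δ : SC V) : ℤ := -∑ σ ∈ Δ.faces, (-1 : ℤ) ^ σ.card

/-- `Δ` is an Eulerian complex of dimension `D`: it is pure of dimension `D` and the
reduced Euler characteristic of the link of every face `σ` (including `σ = ∅`)
equals `(-1) ^ (dim lk σ)`, written multiplicatively to avoid signed dimensions. -/
def IsEulerian (Δ : SC V) (D : ℕ) : Prop :=
  Δ.Pure D ∧ ∀ σ ∈ Δ.faces, (Δ.link σ).redChar * (-1) ^ σ.card = (-1) ^ D

/-- A weak pseudomanifold of dimension `D`: pure and every ridge ((D-1)-face) lies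
in exactly two facets. -/
def IsWeakPseudo (Δ : SC V) (D : ℕ) : Prop :=
  Δ.Pure D ∧ ∀ σ ∈ Δ.faces, σ.card = D →
    (Δ.faces.filter fun τ => σ ⊆ τ ∧ τ.card = D + 1).card = 2

/-- A normal pseudomanifold of dimension `D`: a connected weak pseudomanifold all of
whose links of faces of dimension `≤ D - 2` are connected. -/
def IsNormalPseudo (Δ : SC V) (D : ℕ) : Prop :=
  Δ.IsWeakPseudo D ∧ Δ.Connected ∧
    ∀ σ ∈ Δ.faces, σ.card + 1 ≤ D → (Δ.link σ).Connected

/-- The join of two complexes (on disjoint vertex sets). -/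
def join (Δ Γ : SC V) : SC V where
  faces := (Δ.faces ×ˢ Γ.faces).image fun p => p.1 ∪ p.2
  empty_mem := Finset.mem_image.2 ⟨(∅, ∅),
    Finset.mem_product.2 ⟨Δ.empty_mem, Γ.empty_mem⟩, Finset.union_empty ∅⟩
  down_closed := by
    intro σ τ hσ hτ
    rw [Finset.mem_image] at hσ ⊢
    obtain ⟨⟨a, b⟩, hab, rfl⟩ := hσ
    rw [Finset.mem_product] at hab
    refine ⟨(τ ∩ a, τ ∩ b), Finset.mem_product.2
      ⟨Δ.down_closed hab.1 Finset.inter_subset_right,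
       Γ.down_closed hab.2 Finset.inter_subset_right⟩, ?_⟩
    rw [← Finset.inter_union_distrib_left]
    exact Finset.inter_eq_left.2 hτ

/-- The trivial complex, whose only face is the empty face (identity for join). -/
def trivialSC : SC V where
  faces := {∅}
  empty_mem := Finset.mem_singleton_self ∅
  down_closed := by
    intro σ τ hσ hτ
    simp only [Finset.mem_singleton] at hσ ⊢
    subst hσ
    exact Finset.subset_empty.1 hτ

/-- The join of a finite family of complexes. -/
def bigJoin : {k : ℕ} → (Fin k → SC V) → SC V
  | 0, _ => trivialSC
  | _ + 1, C => (C 0).join (bigJoin fun i => C i.succ)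

/-- `Δ` is a cycle (circle) with `n` vertices: a connected, 1-dimensional complex
all of whose vertices have exactly two neighbours. -/
def IsCycle (Δ : SC V) (n : ℕ) : Prop :=
  Δ.vertexSet.card = n ∧ (∀ σ ∈ Δ.faces, σ.card ≤ 2) ∧
    (∀ v ∈ Δ.vertexSet, (Δ.link {v}).vertexSet.card = 2) ∧ Δ.Connected

/-- `Δ` is the boundary complex of the `d`-dimensional cross-polytope: its vertices
come in `d` antipodal pairs and the faces are exactly the sets containing at most
one vertex of each pair. -/
def IsCrossPolytopeBoundary (Δ : SC V) (d : ℕ) : Prop :=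
  ∃ x y : Fin d → V, Function.Injective x ∧ Function.Injective y ∧
    (∀ i j, x i ≠ y j) ∧
    ∀ σ : Finset V, σ ∈ Δ.faces ↔
      ((∀ v ∈ σ, ∃ i, v = x i ∨ v = y i) ∧ ∀ i, ¬(x i ∈ σ ∧ y i ∈ σ))

/-- `Δ` is a simplicial 2-sphere: a connected weak 2-pseudomanifold whose vertex
links are circles and whose reduced Euler characteristic is 1. -/
def IsSphere2 (Δ : SC V) : Prop :=
  Δ.Connected ∧ Δ.IsWeakPseudo 2 ∧
    (∀ v ∈ Δ.vertexSet, ∃ n, 3 ≤ n ∧ (Δ.link {v}).IsCycle n) ∧ Δ.redChar = 1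

/-- `Δ` is a (closed) simplicial 3-manifold: connected, pure of dimension 3, and the
link of every vertex is a simplicial 2-sphere. -/
def Is3Manifold (Δ : SC V) : Prop :=
  Δ.Connected ∧ Δ.Pure 3 ∧ ∀ v ∈ Δ.vertexSet, (Δ.link {v}).IsSphere2

/-- `Δ` is a disjoint union of cycles, each of length at least 4: it is
1-dimensional, 2-regular and its graph has no triangles. -/
def IsDisjointUnionOfCyclesGe4 (Δ : SC V) : Prop :=
  (∀ σ ∈ Δ.faces, σ.card ≤ 2) ∧
    (∀ v ∈ Δ.vertexSet, (Δ.link {v}).vertexSet.card = 2) ∧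
    ∀ u v w : V, ({u, v} : Finset V) ∈ Δ.faces → ({v, w} : Finset V) ∈ Δ.faces →
      ({u, w} : Finset V) ∈ Δ.faces → u = v ∨ v = w ∨ u = w


lemma face_subset (Δ : SC V) {σ : Finset V} (h : σ ∈ Δ.faces) : σ ⊆ Δ.vertexSet :=
  fun v hv => Finset.mem_sup.2 ⟨σ, h, hv⟩

lemma mem_vertexSet_iff (Δ : SC V) {v : V} : v ∈ Δ.vertexSet ↔ {v} ∈ Δ.faces := by
  constructor
  · intro h
    obtain ⟨σ, hσ, hv⟩ := Finset.mem_sup.1 h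
    exact Δ.down_closed hσ (Finset.singleton_subset_iff.2 hv)
  · intro h
    exact Δ.face_subset h (Finset.mem_singleton_self v)

lemma link_vertex_mem (Δ : SC V) {v u : V} :
    u ∈ (Δ.link {v}).vertexSet ↔ u ≠ v ∧ ({u, v} : Finset V) ∈ Δ.faces := by
  rw [mem_vertexSet_iff]
  simp only [link, Finset.mem_insert, Finset.mem_filter]
  constructor
  · rintro (h | ⟨h1, h2, h3⟩)
    · exact absurd h (Finset.singleton_ne_empty u)
    · refine ⟨?_, ?_⟩
      · intro huv
        exact (Finset.disjoint_singleton.1 (huv ▸ h2)) rfl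
      · rwa [← Finset.insert_eq] at h3
  · rintro ⟨hne, hf⟩
    refine Or.inr ⟨Δ.down_closed hf (by simp), Finset.disjoint_singleton.2 hne, ?_⟩
    rwa [← Finset.insert_eq]

/-- the alternating sum of a family of faces -/
def csum (F : Finset (Finset V)) : ℤ := ∑ σ ∈ F, (-1 : ℤ) ^ σ.card

lemma redChar_eq (Δ : SC V) : Δ.redChar = -csum Δ.faces := rfl

lemma csum_singleton_empty : csum ({∅} : Finset (Finset V)) = 1 := by
  simp [csum]

lemma edge_count (Δ : SC V)
    (h2 : ∀ σ ∈ Δ.faces, σ.card ≤ 2)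
    (hreg : ∀ v ∈ Δ.vertexSet, (Δ.link {v}).vertexSet.card = 2) :
    (Δ.faces.filter fun σ => σ.card = 2).card = Δ.vertexSet.card := by
  classical
  set E := Δ.faces.filter fun σ => σ.card = 2 with hE
  have key : ∀ v ∈ Δ.vertexSet, (E.filter fun e => v ∈ e).card = 2 := by
    intro v hv
    rw [← hreg v hv]
    symm
    apply Finset.card_bij (fun u _ => ({u, v} : Finset V))
    · intro u hu
      obtain ⟨hne, hf⟩ := Δ.link_vertex_mem.1 hu
      simp only [hE, Finset.mem_filter]
      exact ⟨⟨hf, Finset.card_pair hne⟩, by simp⟩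
    · intro u hu u' hu' heq
      obtain ⟨hne, _⟩ := Δ.link_vertex_mem.1 hu
      have : u ∈ ({u', v} : Finset V) := heq ▸ Finset.mem_insert_self u {v}
      rcases Finset.mem_insert.1 this with h | h
      · exact h
      · exact absurd (Finset.mem_singleton.1 h) hne
    · intro e he
      simp only [hE, Finset.mem_filter] at he
      obtain ⟨⟨hef, hc2⟩, hve⟩ := he
      obtain ⟨x, y, hxy, rfl⟩ := Finset.card_eq_two.1 hc2
      rcases Finset.mem_insert.1 hve with rfl | hy
      · refine ⟨y, Δ.link_vertex_mem.2 ⟨hxy.symm, by rwa [Finset.pair_comm]⟩, ?_⟩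
        rw [Finset.pair_comm]
      · have : v = y := Finset.mem_singleton.1 hy
        subst this
        exact ⟨x, Δ.link_vertex_mem.2 ⟨hxy, hef⟩, rfl⟩
  have dbl : ∑ v ∈ Δ.vertexSet, (E.filter fun e => v ∈ e).card
      = ∑ e ∈ E, (Δ.vertexSet.filter fun v => v ∈ e).card := by
    simp only [Finset.card_filter]
    exact Finset.sum_comm
  have lhs : ∑ v ∈ Δ.vertexSet, (E.filter fun e => v ∈ e).card = 2 * Δ.vertexSet.card := by
    rw [Finset.sum_congr rfl key, Finset.sum_const, smul_eq_mul, mul_comm]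
  have rhs : ∑ e ∈ E, (Δ.vertexSet.filter fun v => v ∈ e).card = 2 * E.card := by
    have : ∀ e ∈ E, (Δ.vertexSet.filter fun v => v ∈ e).card = 2 := by
      intro e he
      simp only [hE, Finset.mem_filter] at he
      have hsub : e ⊆ Δ.vertexSet := Δ.face_subset he.1
      have : Δ.vertexSet.filter (fun v => v ∈ e) = e := by
        ext x
        simp only [Finset.mem_filter]
        exact ⟨fun h => h.2, fun h => ⟨hsub h, h⟩⟩
      rw [this, he.2]
    rw [Finset.sum_congr rfl this, Finset.sum_const, smul_eq_mul, mul_comm]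
  omega

lemma csum_eq (Δ : SC V) (h2 : ∀ σ ∈ Δ.faces, σ.card ≤ 2) :
    csum Δ.faces = 1 - (Δ.vertexSet.card : ℤ)
      + ((Δ.faces.filter fun σ => σ.card = 2).card : ℤ) := by
  classical
  have hmaps : ∀ σ ∈ Δ.faces, σ.card ∈ Finset.range 3 :=
    fun σ hσ => Finset.mem_range.2 (Nat.lt_succ_of_le (h2 σ hσ))
  have hfib := Finset.sum_fiberwise_of_maps_to (g := fun σ : Finset V => σ.card)
    (f := fun σ : Finset V => (-1 : ℤ) ^ σ.card) hmaps
  rw [csum, ← hfib]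
  have hconst : ∀ k ∈ Finset.range 3,
      ∑ σ ∈ Δ.faces.filter (fun σ => σ.card = k), (-1 : ℤ) ^ σ.card
      = (-1 : ℤ) ^ k * ((Δ.faces.filter fun σ => σ.card = k).card : ℤ) := by
    intro k _
    rw [Finset.sum_congr rfl (fun σ hσ => by rw [(Finset.mem_filter.1 hσ).2]),
      Finset.sum_const, nsmul_eq_mul, mul_comm]
  rw [Finset.sum_congr rfl hconst]
  have h0 : Δ.faces.filter (fun σ => σ.card = 0) = {∅} := by
    ext σ
    simp only [Finset.mem_filter, Finset.mem_singleton, Finset.card_eq_zero]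
    exact ⟨fun h => h.2, fun h => ⟨h ▸ Δ.empty_mem, h⟩⟩
  have h1 : (Δ.faces.filter fun σ => σ.card = 1).card = Δ.vertexSet.card := by
    symm
    apply Finset.card_bij (fun v _ => ({v} : Finset V))
    · intro v hv
      simp only [Finset.mem_filter, Finset.card_singleton, and_true]
      exact Δ.mem_vertexSet_iff.1 hv
    · intro v _ v' _ h
      exact Finset.singleton_injective h
    · intro σ hσ
      simp only [Finset.mem_filter, Finset.card_eq_one] at hσ
      obtain ⟨hf, v, rfl⟩ := hσ
      exact ⟨v, Δ.mem_vertexSet_iff.2 hf, rfl⟩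
  rw [Finset.sum_range_succ, Finset.sum_range_succ, Finset.sum_range_succ,
    Finset.sum_range_zero, h0, h1, Finset.card_singleton]
  push_cast
  ring

lemma cycle_csum (Δ : SC V) {m : ℕ} (h : Δ.IsCycle m) : csum Δ.faces = 1 := by
  obtain ⟨hcard, h2, hreg, _⟩ := h
  rw [csum_eq Δ h2, edge_count Δ h2 hreg]
  ring

lemma link_vertex_faces_small (Δ : SC V) (h2 : ∀ σ ∈ Δ.faces, σ.card ≤ 2) (v : V) :
    ∀ τ ∈ (Δ.link {v}).faces, τ.card ≤ 1 := by
  intro τ hτ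
  rcases Finset.mem_insert.1 hτ with rfl | hτ
  · simp
  · obtain ⟨_, hd, hu⟩ := Finset.mem_filter.1 hτ
    have := h2 _ hu
    rw [Finset.card_union_of_disjoint hd, Finset.card_singleton] at this
    omega

lemma cycle_link_csum (Δ : SC V) (h2 : ∀ σ ∈ Δ.faces, σ.card ≤ 2)
    (hreg : ∀ v ∈ Δ.vertexSet, (Δ.link {v}).vertexSet.card = 2)
    {v : V} (hv : v ∈ Δ.vertexSet) : csum (Δ.link {v}).faces = -1 := by
  have hsmall := Δ.link_vertex_faces_small h2 v
  have h2' : ∀ σ ∈ (Δ.link {v}).faces, σ.card ≤ 2 := fun σ hσ => (hsmall σ hσ).trans one_le_two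
  have hf2 : (Δ.link {v}).faces.filter (fun σ => σ.card = 2) = ∅ := by
    apply Finset.filter_false_of_mem
    intro σ hσ
    have := hsmall σ hσ
    omega
  rw [csum_eq _ h2', hf2, hreg v hv]
  simp

lemma cycle_link_edge_faces (Δ : SC V) (h2 : ∀ σ ∈ Δ.faces, σ.card ≤ 2)
    {u v : V} (huv : u ≠ v) :
    (Δ.link {u, v}).faces = {∅} := by
  ext τ
  simp only [Finset.mem_singleton]
  constructor
  · intro hτ
    rcases Finset.mem_insert.1 hτ with rfl | hτ
    · rfl
    · obtain ⟨_, hd, hu⟩ := Finset.mem_filter.1 hτ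
      have hc := h2 _ hu
      rw [Finset.card_union_of_disjoint hd, Finset.card_pair huv] at hc
      rw [← Finset.card_eq_zero]
      omega
  · rintro rfl
    exact Finset.mem_insert_self _ _

lemma cycle_no_triangle (Δ : SC V) {m : ℕ} (hm : 4 ≤ m) (h : Δ.IsCycle m)
    {u v w : V} (huv : u ≠ v) (hvw : v ≠ w) (huw : u ≠ w)
    (e1 : ({u, v} : Finset V) ∈ Δ.faces) (e2 : ({v, w} : Finset V) ∈ Δ.faces)
    (e3 : ({u, w} : Finset V) ∈ Δ.faces) : False := by
  obtain ⟨hcard, h2, hreg, hconn⟩ := h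
  set S : Finset V := {u, v, w} with hS
  have hmemS : ∀ x y z : V, x ≠ y → x ≠ z →
      ({x, y} : Finset V) ∈ Δ.faces → ({x, z} : Finset V) ∈ Δ.faces →
      y ≠ z → ∀ p, Δ.graph.Adj x p → p ∈ ({y, z} : Finset V) := by
    intro x y z hxy hxz f1 f2 hyz p hadj
    have hx : x ∈ Δ.vertexSet := Δ.face_subset f1 (Finset.mem_insert_self x {y})
    have hN := hreg x hx
    have hyN : y ∈ (Δ.link {x}).vertexSet :=
      Δ.link_vertex_mem.2 ⟨hxy.symm, by rwa [Finset.pair_comm]⟩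
    have hzN : z ∈ (Δ.link {x}).vertexSet :=
      Δ.link_vertex_mem.2 ⟨hxz.symm, by rwa [Finset.pair_comm]⟩
    have hsub : ({y, z} : Finset V) ⊆ (Δ.link {x}).vertexSet := by
      intro q hq
      rcases Finset.mem_insert.1 hq with rfl | hq
      · exact hyN
      · rw [Finset.mem_singleton.1 hq]; exact hzN
    have heq : ({y, z} : Finset V) = (Δ.link {x}).vertexSet := by
      apply Finset.eq_of_subset_of_card_le hsub
      rw [hN, Finset.card_pair hyz]
    have hpN : p ∈ (Δ.link {x}).vertexSet :=
      Δ.link_vertex_mem.2 ⟨hadj.1.symm, by rw [Finset.pair_comm]; exact hadj.2⟩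
    rw [← heq] at hpN
    exact hpN
  have sub2 : ∀ y z : V, y ∈ S → z ∈ S → ({y, z} : Finset V) ⊆ S := by
    intro y z hy hz q hq
    rcases Finset.mem_insert.1 hq with rfl | hq
    · exact hy
    · rw [Finset.mem_singleton.1 hq]; exact hz
  have huS : u ∈ S := Finset.mem_insert_self _ _
  have hvS : v ∈ S := Finset.mem_insert.2 (Or.inr (Finset.mem_insert_self _ _))
  have hwS : w ∈ S := Finset.mem_insert.2 (Or.inr (Finset.mem_insert.2
    (Or.inr (Finset.mem_singleton_self _))))
  have closed : ∀ x ∈ S, ∀ p, Δ.graph.Adj x p → p ∈ S := by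
    intro x hx p hadj
    rcases Finset.mem_insert.1 hx with rfl | hx
    · exact sub2 v w hvS hwS (hmemS x v w huv huw e1 e3 hvw p hadj)
    rcases Finset.mem_insert.1 hx with rfl | hx
    · exact sub2 u w huS hwS
        (hmemS x u w huv.symm hvw (by rwa [Finset.pair_comm]) e2 huw p hadj)
    · have hxw := Finset.mem_singleton.1 hx
      subst hxw
      exact sub2 u v huS hvS
        (hmemS x u v huw.symm hvw.symm (by rwa [Finset.pair_comm])
          (by rwa [Finset.pair_comm]) huv p hadj)
  have walkS : ∀ (x y : V) (p : Δ.graph.Walk x y), x ∈ S → y ∈ S := by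
    intro x y p
    induction p with
    | nil => exact id
    | cons hadj q ih => exact fun hx => ih (closed _ hx _ hadj)
  have hcardS : S.card ≤ 3 := by
    have c1 : S.card ≤ ({v, w} : Finset V).card + 1 := Finset.card_insert_le _ _
    have c2 : ({v, w} : Finset V).card ≤ ({w} : Finset V).card + 1 := Finset.card_insert_le _ _
    simp only [Finset.card_singleton] at c2
    omega
  have hnotsub : ¬ Δ.vertexSet ⊆ S := by
    intro hsub
    have := Finset.card_le_card hsub
    omega
  obtain ⟨x, hxV, hxS⟩ := Finset.not_subset.1 hnotsub
  have hu : u ∈ Δ.vertexSet := Δ.face_subset e1 (Finset.mem_insert_self _ _)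
  obtain ⟨p⟩ := hconn.2 u hu x hxV
  exact hxS (walkS u x p huS)

lemma cycle_exists_nbr (Δ : SC V)
    (hreg : ∀ v ∈ Δ.vertexSet, (Δ.link {v}).vertexSet.card = 2)
    {v : V} (hv : v ∈ Δ.vertexSet) :
    ∃ u, u ≠ v ∧ ({u, v} : Finset V) ∈ Δ.faces := by
  have h := hreg v hv
  have : (Δ.link {v}).vertexSet.Nonempty := by
    rw [← Finset.card_pos, h]; norm_num
  obtain ⟨u, hu⟩ := this
  obtain ⟨hne, hf⟩ := Δ.link_vertex_mem.1 hu
  exact ⟨u, hne, hf⟩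

end SC

section JoinAux
variable {V : Type*} [DecidableEq V]

lemma union_inter_left' {VA VB : Finset V} (hd : Disjoint VA VB) {x y : Finset V}
    (hx : x ⊆ VA) (hy : y ⊆ VB) : (x ∪ y) ∩ VA = x := by
  rw [Finset.union_inter_distrib_right, Finset.inter_eq_left.2 hx,
    (Finset.disjoint_iff_inter_eq_empty.1 (hd.symm.mono_left hy)), Finset.union_empty]

lemma union_inter_right' {VA VB : Finset V} (hd : Disjoint VA VB) {x y : Finset V}
    (hx : x ⊆ VA) (hy : y ⊆ VB) : (x ∪ y) ∩ VB = y := by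
  rw [Finset.union_inter_distrib_right, Finset.inter_eq_left.2 hy,
    (Finset.disjoint_iff_inter_eq_empty.1 (hd.mono_left hx)), Finset.empty_union]

lemma csum_image_union {VA VB : Finset V} (hd : Disjoint VA VB)
    {FA FB : Finset (Finset V)} (hA : ∀ σ ∈ FA, σ ⊆ VA) (hB : ∀ σ ∈ FB, σ ⊆ VB) :
    SC.csum ((FA ×ˢ FB).image fun p => p.1 ∪ p.2) = SC.csum FA * SC.csum FB := by
  rw [SC.csum, Finset.sum_image ?inj]
  case inj =>
    intro p hp q hq heq
    rw [Finset.mem_coe, Finset.mem_product] at hp hq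
    beta_reduce at heq
    have h1 : p.1 = q.1 := by
      rw [← union_inter_left' hd (hA _ hp.1) (hB _ hp.2), heq,
        union_inter_left' hd (hA _ hq.1) (hB _ hq.2)]
    have h2 : p.2 = q.2 := by
      rw [← union_inter_right' hd (hA _ hp.1) (hB _ hp.2), heq,
        union_inter_right' hd (hA _ hq.1) (hB _ hq.2)]
    exact Prod.ext h1 h2
  rw [Finset.sum_product]
  rw [SC.csum, SC.csum, Finset.sum_mul_sum]
  apply Finset.sum_congr rfl
  intro x hx
  apply Finset.sum_congr rfl
  intro y hy
  have hdxy : Disjoint x y := hd.mono (hA _ hx) (hB _ hy)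
  rw [Finset.card_union_of_disjoint hdxy, pow_add]

end JoinAux

namespace SC
variable {V : Type*} [DecidableEq V]

lemma csum_biUnion_cycles {k : ℕ} (C : Fin k → SC V) (m : Fin k → ℕ)
    (hC : ∀ i, (C i).IsCycle (m i)) (hk : k ≠ 0)
    (hd : ∀ i i', i ≠ i' → Disjoint (C i).vertexSet (C i').vertexSet) :
    csum (Finset.univ.biUnion fun i => (C i).faces) = 1 := by
  classical
  set F := Finset.univ.biUnion fun i => (C i).faces with hF
  have h0 : ∅ ∈ F :=
    Finset.mem_biUnion.2 ⟨⟨0, Nat.pos_of_ne_zero hk⟩, Finset.mem_univ _, (C _).empty_mem⟩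
  have herase : F.erase ∅ = Finset.univ.biUnion (fun i => (C i).faces.erase ∅) := by
    ext σ
    simp only [Finset.mem_erase, Finset.mem_biUnion, Finset.mem_univ, true_and, hF]
    tauto
  have hsum : csum F = (-1 : ℤ) ^ (∅ : Finset V).card + ∑ σ ∈ F.erase ∅, (-1 : ℤ) ^ σ.card :=
    (Finset.add_sum_erase _ _ h0).symm
  rw [hsum, herase, Finset.sum_biUnion ?pd]
  case pd =>
    intro i _ i' _ hne
    refine Finset.disjoint_left.2 ?_
    intro σ h1 h2
    rw [Finset.mem_erase] at h1 h2
    have hdisj := hd i i' hne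
    have hsub1 := (C i).face_subset h1.2
    have hsub2 := (C i').face_subset h2.2
    have hσ : σ ⊆ ∅ := fun x hx => (Finset.disjoint_left.1 hdisj (hsub1 hx) (hsub2 hx)).elim
    exact h1.1 (Finset.subset_empty.1 hσ)
  have hinner : ∀ i ∈ (Finset.univ : Finset (Fin k)),
      ∑ σ ∈ (C i).faces.erase ∅, (-1 : ℤ) ^ σ.card = 0 := by
    intro i _
    have hc := (C i).cycle_csum (hC i)
    rw [csum, ← Finset.add_sum_erase _ _ (C i).empty_mem] at hc
    simpa using hc
  rw [Finset.sum_congr rfl hinner]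
  simp

lemma csum_LA {k : ℕ} (C : Fin k → SC V) (m : Fin k → ℕ) (hC : ∀ i, (C i).IsCycle (m i))
    (hk : k ≠ 0)
    (hd : ∀ i i', i ≠ i' → Disjoint (C i).vertexSet (C i').vertexSet)
    (τ : Finset V) (i0 : Fin k) (hτ : τ ∈ (C i0).faces) :
    csum ((Finset.univ.biUnion fun i => (C i).vertexSet).powerset.filter
      (fun ρ => Disjoint ρ τ ∧ ∃ i, ρ ∪ τ ∈ (C i).faces)) = (-1 : ℤ) ^ τ.card := by
  classical
  have hc2 : ∀ i, ∀ σ ∈ (C i).faces, σ.card ≤ 2 := fun i => (hC i).2.1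
  have hsubV : ∀ i, ∀ σ ∈ (C i).faces, σ ⊆ Finset.univ.biUnion fun i => (C i).vertexSet :=
    fun i σ hσ => ((C i).face_subset hσ).trans
      (Finset.subset_biUnion_of_mem (fun i => (C i).vertexSet) (Finset.mem_univ i))
  have hτc : τ.card ≤ 2 := hc2 i0 τ hτ
  have hcases : τ.card = 0 ∨ τ.card = 1 ∨ τ.card = 2 := by omega
  rcases hcases with h | h | h
  · -- τ = ∅
    rw [Finset.card_eq_zero] at h
    subst h
    have : ((Finset.univ.biUnion fun i => (C i).vertexSet).powerset.filter
        (fun ρ => Disjoint ρ (∅ : Finset V) ∧ ∃ i, ρ ∪ ∅ ∈ (C i).faces))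
        = Finset.univ.biUnion fun i => (C i).faces := by
      ext ρ
      simp only [Finset.mem_filter, Finset.mem_powerset, Finset.mem_biUnion, Finset.mem_univ,
        true_and, Finset.disjoint_empty_right, Finset.union_empty]
      constructor
      · rintro ⟨-, i, hi⟩
        exact ⟨i, hi⟩
      · rintro ⟨i, hi⟩
        exact ⟨hsubV i ρ hi, i, hi⟩
    rw [this, csum_biUnion_cycles C m hC hk hd]
    simp
  · -- τ = {v}
    obtain ⟨v, rfl⟩ := Finset.card_eq_one.1 h
    have hv : v ∈ (C i0).vertexSet := (C i0).mem_vertexSet_iff.2 hτ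
    have : ((Finset.univ.biUnion fun i => (C i).vertexSet).powerset.filter
        (fun ρ => Disjoint ρ ({v} : Finset V) ∧ ∃ i, ρ ∪ {v} ∈ (C i).faces))
        = ((C i0).link {v}).faces := by
      ext ρ
      simp only [Finset.mem_filter, Finset.mem_powerset]
      constructor
      · rintro ⟨hsub, hdisj, i, hi⟩
        rcases eq_or_ne ρ ∅ with rfl | hne
        · exact Finset.mem_insert_self _ _
        · have hvi : v ∈ (C i).vertexSet :=
            (C i).face_subset hi (Finset.mem_union_right _ (Finset.mem_singleton_self v))
          have hii0 : i = i0 := by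
            by_contra hne'
            exact Finset.disjoint_left.1 (hd i i0 hne') hvi hv
          subst hii0
          refine Finset.mem_insert.2 (Or.inr (Finset.mem_filter.2
            ⟨(C i).down_closed hi Finset.subset_union_left, hdisj, hi⟩))
      · intro hρ
        rcases Finset.mem_insert.1 hρ with rfl | hρ
        · refine ⟨Finset.empty_subset _, Finset.disjoint_empty_left _, i0, ?_⟩
          rwa [Finset.empty_union]
        · obtain ⟨hρf, hdisj, hu⟩ := Finset.mem_filter.1 hρ
          exact ⟨hsubV i0 ρ hρf, hdisj, i0, hu⟩
    rw [this, (C i0).cycle_link_csum (hc2 i0) (hC i0).2.2.1 hv]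
    simp
  · -- card 2
    obtain ⟨u, v, huv, rfl⟩ := Finset.card_eq_two.1 h
    have : ((Finset.univ.biUnion fun i => (C i).vertexSet).powerset.filter
        (fun ρ => Disjoint ρ ({u, v} : Finset V) ∧ ∃ i, ρ ∪ {u, v} ∈ (C i).faces))
        = ({∅} : Finset (Finset V)) := by
      ext ρ
      simp only [Finset.mem_filter, Finset.mem_powerset, Finset.mem_singleton]
      constructor
      · rintro ⟨hsub, hdisj, i, hi⟩
        have hcard := hc2 i _ hi
        rw [Finset.card_union_of_disjoint hdisj, Finset.card_pair huv] at hcard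
        rw [← Finset.card_eq_zero]
        omega
      · rintro rfl
        refine ⟨Finset.empty_subset _, Finset.disjoint_empty_left _, i0, ?_⟩
        rwa [Finset.empty_union]
    rw [this, csum_singleton_empty, Finset.card_pair huv]
    norm_num

end SC

/-- For `n ≥ 8` and cycles `C_{a_i}`, `C_{b_j}` of lengths `a_i, b_j ≥ 4`
with `Σ a_i = ⌊n/2⌋` and `Σ b_j = ⌈n/2⌉` on disjoint vertex sets, the complex
`Δ = ⋃_{i,j} (C_{a_i} * C_{b_j})` is a flag 3-dimensional Eulerian complex on `n`
vertices with `f₁(Δ) = ⌊n²/4⌋ + n`. -/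
theorem statement_15 {V : Type*} [DecidableEq V] (n s t : ℕ) (hn : 8 ≤ n)
    (a : Fin s → ℕ) (b : Fin t → ℕ) (ha : ∀ i, 4 ≤ a i) (hb : ∀ j, 4 ≤ b j)
    (hsa : ∑ i, a i = n / 2) (hsb : ∑ j, b j = (n + 1) / 2)
    (Ca : Fin s → SC V) (Cb : Fin t → SC V)
    (hCa : ∀ i, (Ca i).IsCycle (a i)) (hCb : ∀ j, (Cb j).IsCycle (b j))
    (hdisja : ∀ i i', i ≠ i' → Disjoint (Ca i).vertexSet (Ca i').vertexSet)
    (hdisjb : ∀ j j', j ≠ j' → Disjoint (Cb j).vertexSet (Cb j').vertexSet)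
    (hdisjab : ∀ i j, Disjoint (Ca i).vertexSet (Cb j).vertexSet)
    (Δ : SC V)
    (hΔ : ∀ σ : Finset V, σ ∈ Δ.faces ↔ ∃ i j, σ ∈ ((Ca i).join (Cb j)).faces) :
    Δ.IsFlag ∧ Δ.IsEulerian 3 ∧ Δ.vertexSet.card = n ∧
      Δ.fNum 1 = n ^ 2 / 4 + n := by
  classical
  have hs0 : s ≠ 0 := by
    rintro rfl
    simp only [Finset.univ_eq_empty, Finset.sum_empty] at hsa
    omega
  have ht0 : t ≠ 0 := by
    rintro rfl
    simp only [Finset.univ_eq_empty, Finset.sum_empty] at hsb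
    omega
  set VA := Finset.univ.biUnion (fun i => (Ca i).vertexSet) with hVAdef
  set VB := Finset.univ.biUnion (fun j => (Cb j).vertexSet) with hVBdef
  set FA := Finset.univ.biUnion (fun i => (Ca i).faces) with hFAdef
  set FB := Finset.univ.biUnion (fun j => (Cb j).faces) with hFBdef
  have hAface_sub : ∀ i, ∀ σ ∈ (Ca i).faces, σ ⊆ VA := by
    intro i σ hσ
    rw [hVAdef]
    exact ((Ca i).face_subset hσ).trans (Finset.subset_biUnion_of_mem (fun i => (Ca i).vertexSet) (Finset.mem_univ i))
  have hBface_sub : ∀ j, ∀ σ ∈ (Cb j).faces, σ ⊆ VB := by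
    intro j σ hσ
    rw [hVBdef]
    exact ((Cb j).face_subset hσ).trans (Finset.subset_biUnion_of_mem (fun j => (Cb j).vertexSet) (Finset.mem_univ j))
  have hFAsub : ∀ σ ∈ FA, σ ⊆ VA := by
    intro σ hσ
    rw [hFAdef] at hσ
    obtain ⟨i, _, hi⟩ := Finset.mem_biUnion.1 hσ
    exact hAface_sub i σ hi
  have hFBsub : ∀ σ ∈ FB, σ ⊆ VB := by
    intro σ hσ
    rw [hFBdef] at hσ
    obtain ⟨j, _, hj⟩ := Finset.mem_biUnion.1 hσ
    exact hBface_sub j σ hj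
  have hdAB : Disjoint VA VB := by
    rw [hVAdef, Finset.disjoint_left]
    intro v hv hv'
    obtain ⟨i, _, hi⟩ := Finset.mem_biUnion.1 hv
    obtain ⟨j, _, hj⟩ := Finset.mem_biUnion.1 hv'
    exact Finset.disjoint_left.1 (hdisjab i j) hi hj
  have hfaces : Δ.faces = (FA ×ˢ FB).image fun p => p.1 ∪ p.2 := by
    ext σ
    rw [hΔ]
    simp only [SC.join, Finset.mem_image, Finset.mem_product, Finset.mem_biUnion,
      Finset.mem_univ, true_and, hFAdef, hFBdef]
    constructor
    · rintro ⟨i, j, p, ⟨h1, h2⟩, rfl⟩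
      exact ⟨p, ⟨⟨i, h1⟩, ⟨j, h2⟩⟩, rfl⟩
    · rintro ⟨p, ⟨⟨i, h1⟩, ⟨j, h2⟩⟩, rfl⟩
      exact ⟨i, j, p, ⟨h1, h2⟩, rfl⟩
  have hmem_of : ∀ {τA τB : Finset V}, τA ∈ FA → τB ∈ FB → τA ∪ τB ∈ Δ.faces := by
    intro τA τB h1 h2
    rw [hfaces]
    exact Finset.mem_image.2 ⟨(τA, τB), Finset.mem_product.2 ⟨h1, h2⟩, rfl⟩
  have hmem_split : ∀ σ ∈ Δ.faces, σ ∩ VA ∈ FA ∧ σ ∩ VB ∈ FB ∧ σ = (σ ∩ VA) ∪ (σ ∩ VB) := by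
    intro σ hσ
    rw [hfaces] at hσ
    obtain ⟨p, hp, rfl⟩ := Finset.mem_image.1 hσ
    rw [Finset.mem_product] at hp
    have e1 : (p.1 ∪ p.2) ∩ VA = p.1 := union_inter_left' hdAB (hFAsub _ hp.1) (hFBsub _ hp.2)
    have e2 : (p.1 ∪ p.2) ∩ VB = p.2 := union_inter_right' hdAB (hFAsub _ hp.1) (hFBsub _ hp.2)
    rw [e1, e2]
    exact ⟨hp.1, hp.2, rfl⟩
  have hsubAB : ∀ σ ∈ Δ.faces, σ ⊆ VA ∪ VB := by
    intro σ hσ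
    obtain ⟨h1, h2, h3⟩ := hmem_split σ hσ
    rw [h3]
    exact Finset.union_subset_union (hFAsub _ h1) (hFBsub _ h2)
  have hemptyA : ∅ ∈ FA := by
    rw [hFAdef]
    exact Finset.mem_biUnion.2 ⟨⟨0, Nat.pos_of_ne_zero hs0⟩, Finset.mem_univ _, (Ca _).empty_mem⟩
  have hemptyB : ∅ ∈ FB := by
    rw [hFBdef]
    exact Finset.mem_biUnion.2 ⟨⟨0, Nat.pos_of_ne_zero ht0⟩, Finset.mem_univ _, (Cb _).empty_mem⟩
  have hsingA : ∀ v ∈ VA, {v} ∈ FA := by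
    intro v hv
    rw [hVAdef] at hv
    rw [hFAdef]
    obtain ⟨i, _, hi⟩ := Finset.mem_biUnion.1 hv
    exact Finset.mem_biUnion.2 ⟨i, Finset.mem_univ i, (Ca i).mem_vertexSet_iff.1 hi⟩
  have hsingB : ∀ v ∈ VB, {v} ∈ FB := by
    intro v hv
    rw [hVBdef] at hv
    rw [hFBdef]
    obtain ⟨j, _, hj⟩ := Finset.mem_biUnion.1 hv
    exact Finset.mem_biUnion.2 ⟨j, Finset.mem_univ j, (Cb j).mem_vertexSet_iff.1 hj⟩
  have hVS : Δ.vertexSet = VA ∪ VB := by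
    apply Finset.Subset.antisymm
    · intro v hv
      exact hsubAB _ (Δ.mem_vertexSet_iff.1 hv) (Finset.mem_singleton_self v)
    · intro v hv
      rw [Δ.mem_vertexSet_iff]
      rcases Finset.mem_union.1 hv with h | h
      · have := hmem_of (hsingA v h) hemptyB
        rwa [Finset.union_empty] at this
      · have := hmem_of hemptyA (hsingB v h)
        rwa [Finset.empty_union] at this
  have hVAcard : VA.card = n / 2 := by
    rw [hVAdef, Finset.card_biUnion (fun i _ i' _ hne => hdisja i i' hne), ← hsa]
    exact Finset.sum_congr rfl (fun i _ => (hCa i).1)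
  have hVBcard : VB.card = (n + 1) / 2 := by
    rw [hVBdef, Finset.card_biUnion (fun j _ j' _ hne => hdisjb j j' hne), ← hsb]
    exact Finset.sum_congr rfl (fun j _ => (hCb j).1)
  have hcsFA : SC.csum FA = 1 := by
    rw [hFAdef]
    exact SC.csum_biUnion_cycles Ca a hCa hs0 hdisja
  have hcsFB : SC.csum FB = 1 := by
    rw [hFBdef]
    exact SC.csum_biUnion_cycles Cb b hCb ht0 hdisjb
  have hFAcard : ∀ σ ∈ FA, σ.card ≤ 2 := by
    intro σ hσ
    rw [hFAdef] at hσ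
    obtain ⟨i, -, hi⟩ := Finset.mem_biUnion.1 hσ
    exact (hCa i).2.1 σ hi
  have hFBcard : ∀ σ ∈ FB, σ.card ≤ 2 := by
    intro σ hσ
    rw [hFBdef] at hσ
    obtain ⟨j, -, hj⟩ := Finset.mem_biUnion.1 hσ
    exact (hCb j).2.1 σ hj
  have hcard4 : ∀ σ ∈ Δ.faces, σ.card ≤ 3 + 1 := by
    intro σ hσ
    obtain ⟨h1, h2, h3⟩ := hmem_split σ hσ
    have hle := Finset.card_union_le (σ ∩ VA) (σ ∩ VB)
    rw [← h3] at hle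
    have ca := hFAcard _ h1
    have cb := hFBcard _ h2
    omega
  have hextA : ∀ τ ∈ FA, τ.card < 2 → ∃ τ' ∈ FA, τ ⊆ τ' ∧ τ'.card = τ.card + 1 := by
    intro τ hτ hlt
    rw [hFAdef] at hτ
    obtain ⟨i, -, hi⟩ := Finset.mem_biUnion.1 hτ
    have hc : τ.card = 0 ∨ τ.card = 1 := by omega
    rcases hc with h | h
    · rw [Finset.card_eq_zero] at h
      subst h
      have hne : (Ca i).vertexSet.Nonempty := by
        rw [← Finset.card_pos, (hCa i).1]
        have := ha i
        omega
      obtain ⟨v, hv⟩ := hne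
      refine ⟨{v}, ?_, Finset.empty_subset _, by simp⟩
      rw [hFAdef]
      exact Finset.mem_biUnion.2 ⟨i, Finset.mem_univ i, (Ca i).mem_vertexSet_iff.1 hv⟩
    · obtain ⟨v, rfl⟩ := Finset.card_eq_one.1 h
      have hv : v ∈ (Ca i).vertexSet := (Ca i).mem_vertexSet_iff.2 hi
      obtain ⟨u, hune, huf⟩ := (Ca i).cycle_exists_nbr (hCa i).2.2.1 hv
      refine ⟨{u, v}, ?_, ?_, ?_⟩
      · rw [hFAdef]
        exact Finset.mem_biUnion.2 ⟨i, Finset.mem_univ i, huf⟩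
      · intro x hx
        rw [Finset.mem_singleton.1 hx]
        exact Finset.mem_insert.2 (Or.inr (Finset.mem_singleton_self v))
      · rw [Finset.card_pair hune, Finset.card_singleton]
  have hextB : ∀ τ ∈ FB, τ.card < 2 → ∃ τ' ∈ FB, τ ⊆ τ' ∧ τ'.card = τ.card + 1 := by
    intro τ hτ hlt
    rw [hFBdef] at hτ
    obtain ⟨j, -, hj⟩ := Finset.mem_biUnion.1 hτ
    have hc : τ.card = 0 ∨ τ.card = 1 := by omega
    rcases hc with h | h
    · rw [Finset.card_eq_zero] at h
      subst h
      have hne : (Cb j).vertexSet.Nonempty := by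
        rw [← Finset.card_pos, (hCb j).1]
        have := hb j
        omega
      obtain ⟨v, hv⟩ := hne
      refine ⟨{v}, ?_, Finset.empty_subset _, by simp⟩
      rw [hFBdef]
      exact Finset.mem_biUnion.2 ⟨j, Finset.mem_univ j, (Cb j).mem_vertexSet_iff.1 hv⟩
    · obtain ⟨v, rfl⟩ := Finset.card_eq_one.1 h
      have hv : v ∈ (Cb j).vertexSet := (Cb j).mem_vertexSet_iff.2 hj
      obtain ⟨u, hune, huf⟩ := (Cb j).cycle_exists_nbr (hCb j).2.2.1 hv
      refine ⟨{u, v}, ?_, ?_, ?_⟩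
      · rw [hFBdef]
        exact Finset.mem_biUnion.2 ⟨j, Finset.mem_univ j, huf⟩
      · intro x hx
        rw [Finset.mem_singleton.1 hx]
        exact Finset.mem_insert.2 (Or.inr (Finset.mem_singleton_self v))
      · rw [Finset.card_pair hune, Finset.card_singleton]
  have hext : ∀ σ ∈ Δ.faces, σ.card < 4 → ∃ τ ∈ Δ.faces, σ ⊆ τ ∧ σ.card < τ.card := by
    intro σ hσ hlt
    obtain ⟨h1, h2, h3⟩ := hmem_split σ hσ
    have hdisjσ : Disjoint (σ ∩ VA) (σ ∩ VB) :=
      hdAB.mono Finset.inter_subset_right Finset.inter_subset_right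
    have hcardσ : σ.card = (σ ∩ VA).card + (σ ∩ VB).card := by
      conv_lhs => rw [h3]
      exact Finset.card_union_of_disjoint hdisjσ
    rcases lt_or_ge (σ ∩ VA).card 2 with hA | hA
    · obtain ⟨τ', hτ'F, hsub, hc⟩ := hextA _ h1 hA
      refine ⟨τ' ∪ (σ ∩ VB), hmem_of hτ'F h2, ?_, ?_⟩
      · conv_lhs => rw [h3]
        exact Finset.union_subset_union hsub (Finset.Subset.refl _)
      · have hcu : (τ' ∪ (σ ∩ VB)).card = τ'.card + (σ ∩ VB).card :=
          Finset.card_union_of_disjoint (hdAB.mono (hFAsub _ hτ'F) Finset.inter_subset_right)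
        omega
    · have hB : (σ ∩ VB).card < 2 := by
        have := hFAcard _ h1
        omega
      obtain ⟨τ', hτ'F, hsub, hc⟩ := hextB _ h2 hB
      refine ⟨(σ ∩ VA) ∪ τ', hmem_of h1 hτ'F, ?_, ?_⟩
      · conv_lhs => rw [h3]
        exact Finset.union_subset_union (Finset.Subset.refl _) hsub
      · have hcu : ((σ ∩ VA) ∪ τ').card = (σ ∩ VA).card + τ'.card :=
          Finset.card_union_of_disjoint (hdAB.mono Finset.inter_subset_right (hFBsub _ hτ'F))
        omega
  refine ⟨?_, ⟨?_, ?_⟩, ?_, ?_⟩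
  · -- IsFlag
    intro σ hpair
    have hσsub : σ ⊆ VA ∪ VB := by
      intro v hv
      have hvv := hpair v hv v hv
      have hvs : ({v} : Finset V) ∈ Δ.faces := by
        have hvv' : ({v, v} : Finset V) = {v} := by simp
        rwa [hvv'] at hvv
      exact hsubAB _ hvs (Finset.mem_singleton_self v)
    have hedgeA : ∀ u v : V, u ∈ VA → v ∈ VA → u ≠ v → ({u, v} : Finset V) ∈ Δ.faces →
        ∃ i, ({u, v} : Finset V) ∈ (Ca i).faces := by
      intro u v hu hv hne hf
      obtain ⟨h1, -, -⟩ := hmem_split _ hf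
      have hinter : ({u, v} : Finset V) ∩ VA = {u, v} := Finset.inter_eq_left.2 (by
        intro x hx
        rcases Finset.mem_insert.1 hx with rfl | hx
        · exact hu
        · rw [Finset.mem_singleton.1 hx]
          exact hv)
      rw [hinter, hFAdef] at h1
      obtain ⟨i, -, hi⟩ := Finset.mem_biUnion.1 h1
      exact ⟨i, hi⟩
    have hedgeB : ∀ u v : V, u ∈ VB → v ∈ VB → u ≠ v → ({u, v} : Finset V) ∈ Δ.faces →
        ∃ j, ({u, v} : Finset V) ∈ (Cb j).faces := by
      intro u v hu hv hne hf
      obtain ⟨-, h2, -⟩ := hmem_split _ hf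
      have hinter : ({u, v} : Finset V) ∩ VB = {u, v} := Finset.inter_eq_left.2 (by
        intro x hx
        rcases Finset.mem_insert.1 hx with rfl | hx
        · exact hu
        · rw [Finset.mem_singleton.1 hx]
          exact hv)
      rw [hinter, hFBdef] at h2
      obtain ⟨j, -, hj⟩ := Finset.mem_biUnion.1 h2
      exact ⟨j, hj⟩
    have hpairmem : ∀ x ∈ σ, ∀ y ∈ σ, x ≠ y → ({x, y} : Finset V) ∈ Δ.faces :=
      fun x hx y hy _ => hpair x hx y hy
    have hnotri : ∀ (W : Finset V), (∀ u v : V, u ∈ W → v ∈ W → u ≠ v →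
          ({u, v} : Finset V) ∈ Δ.faces → ∃ i, ({u, v} : Finset V) ∈ (Ca i).faces) →
        False → True := fun _ _ _ => trivial
    have hσA : σ ∩ VA ∈ FA := by
      have hsubσ : σ ∩ VA ⊆ σ := Finset.inter_subset_left
      have hsubVA : σ ∩ VA ⊆ VA := Finset.inter_subset_right
      have hcase : (σ ∩ VA).card ≤ 2 := by
        by_contra hgt
        push_neg at hgt
        obtain ⟨T, hTsub, hTcard⟩ := Finset.exists_subset_card_eq (show 3 ≤ (σ ∩ VA).card from hgt)
        obtain ⟨u, v, w, huv, huw, hvw, rfl⟩ := Finset.card_eq_three.1 hTcard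
        have huσ : u ∈ σ ∩ VA := hTsub (by simp)
        have hvσ : v ∈ σ ∩ VA := hTsub (by simp)
        have hwσ : w ∈ σ ∩ VA := hTsub (by simp)
        have euv := hpair u (hsubσ huσ) v (hsubσ hvσ)
        have evw := hpair v (hsubσ hvσ) w (hsubσ hwσ)
        have euw := hpair u (hsubσ huσ) w (hsubσ hwσ)
        obtain ⟨i1, hi1⟩ := hedgeA u v (hsubVA huσ) (hsubVA hvσ) huv euv
        obtain ⟨i2, hi2⟩ := hedgeA v w (hsubVA hvσ) (hsubVA hwσ) hvw evw
        obtain ⟨i3, hi3⟩ := hedgeA u w (hsubVA huσ) (hsubVA hwσ) huw euw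
        have hv1 : v ∈ (Ca i1).vertexSet :=
          (Ca i1).face_subset hi1 (Finset.mem_insert.2 (Or.inr (Finset.mem_singleton_self v)))
        have hv2 : v ∈ (Ca i2).vertexSet :=
          (Ca i2).face_subset hi2 (Finset.mem_insert_self v {w})
        have hu1 : u ∈ (Ca i1).vertexSet := (Ca i1).face_subset hi1 (Finset.mem_insert_self u {v})
        have hu3 : u ∈ (Ca i3).vertexSet := (Ca i3).face_subset hi3 (Finset.mem_insert_self u {w})
        have h12 : i1 = i2 := by
          by_contra hne
          exact Finset.disjoint_left.1 (hdisja i1 i2 hne) hv1 hv2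
        have h13 : i1 = i3 := by
          by_contra hne
          exact Finset.disjoint_left.1 (hdisja i1 i3 hne) hu1 hu3
        subst h12
        subst h13
        exact (Ca i1).cycle_no_triangle (ha i1) (hCa i1) huv hvw huw hi1 hi2 hi3
      have hc : (σ ∩ VA).card = 0 ∨ (σ ∩ VA).card = 1 ∨ (σ ∩ VA).card = 2 := by omega
      rcases hc with h | h | h
      · rw [Finset.card_eq_zero] at h
        rw [h]
        exact hemptyA
      · obtain ⟨v, hveq⟩ := Finset.card_eq_one.1 h
        rw [hveq]
        exact hsingA v (hsubVA (hveq ▸ Finset.mem_singleton_self v))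
      · obtain ⟨u, v, hne, heq⟩ := Finset.card_eq_two.1 h
        have huσ : u ∈ σ ∩ VA := heq ▸ Finset.mem_insert_self u {v}
        have hvσ : v ∈ σ ∩ VA := heq ▸ Finset.mem_insert.2 (Or.inr (Finset.mem_singleton_self v))
        obtain ⟨i, hi⟩ := hedgeA u v (hsubVA huσ) (hsubVA hvσ) hne
          (hpair u (hsubσ huσ) v (hsubσ hvσ))
        rw [heq, hFAdef]
        exact Finset.mem_biUnion.2 ⟨i, Finset.mem_univ i, hi⟩
    have hσB : σ ∩ VB ∈ FB := by
      have hsubσ : σ ∩ VB ⊆ σ := Finset.inter_subset_left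
      have hsubVB : σ ∩ VB ⊆ VB := Finset.inter_subset_right
      have hcase : (σ ∩ VB).card ≤ 2 := by
        by_contra hgt
        push_neg at hgt
        obtain ⟨T, hTsub, hTcard⟩ := Finset.exists_subset_card_eq (show 3 ≤ (σ ∩ VB).card from hgt)
        obtain ⟨u, v, w, huv, huw, hvw, rfl⟩ := Finset.card_eq_three.1 hTcard
        have huσ : u ∈ σ ∩ VB := hTsub (by simp)
        have hvσ : v ∈ σ ∩ VB := hTsub (by simp)
        have hwσ : w ∈ σ ∩ VB := hTsub (by simp)
        have euv := hpair u (hsubσ huσ) v (hsubσ hvσ)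
        have evw := hpair v (hsubσ hvσ) w (hsubσ hwσ)
        have euw := hpair u (hsubσ huσ) w (hsubσ hwσ)
        obtain ⟨j1, hj1⟩ := hedgeB u v (hsubVB huσ) (hsubVB hvσ) huv euv
        obtain ⟨j2, hj2⟩ := hedgeB v w (hsubVB hvσ) (hsubVB hwσ) hvw evw
        obtain ⟨j3, hj3⟩ := hedgeB u w (hsubVB huσ) (hsubVB hwσ) huw euw
        have hv1 : v ∈ (Cb j1).vertexSet :=
          (Cb j1).face_subset hj1 (Finset.mem_insert.2 (Or.inr (Finset.mem_singleton_self v)))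
        have hv2 : v ∈ (Cb j2).vertexSet :=
          (Cb j2).face_subset hj2 (Finset.mem_insert_self v {w})
        have hu1 : u ∈ (Cb j1).vertexSet := (Cb j1).face_subset hj1 (Finset.mem_insert_self u {v})
        have hu3 : u ∈ (Cb j3).vertexSet := (Cb j3).face_subset hj3 (Finset.mem_insert_self u {w})
        have h12 : j1 = j2 := by
          by_contra hne
          exact Finset.disjoint_left.1 (hdisjb j1 j2 hne) hv1 hv2
        have h13 : j1 = j3 := by
          by_contra hne
          exact Finset.disjoint_left.1 (hdisjb j1 j3 hne) hu1 hu3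
        subst h12
        subst h13
        exact (Cb j1).cycle_no_triangle (hb j1) (hCb j1) huv hvw huw hj1 hj2 hj3
      have hc : (σ ∩ VB).card = 0 ∨ (σ ∩ VB).card = 1 ∨ (σ ∩ VB).card = 2 := by omega
      rcases hc with h | h | h
      · rw [Finset.card_eq_zero] at h
        rw [h]
        exact hemptyB
      · obtain ⟨v, hveq⟩ := Finset.card_eq_one.1 h
        rw [hveq]
        exact hsingB v (hsubVB (hveq ▸ Finset.mem_singleton_self v))
      · obtain ⟨u, v, hne, heq⟩ := Finset.card_eq_two.1 h
        have huσ : u ∈ σ ∩ VB := heq ▸ Finset.mem_insert_self u {v}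
        have hvσ : v ∈ σ ∩ VB := heq ▸ Finset.mem_insert.2 (Or.inr (Finset.mem_singleton_self v))
        obtain ⟨j, hj⟩ := hedgeB u v (hsubVB huσ) (hsubVB hvσ) hne
          (hpair u (hsubσ huσ) v (hsubσ hvσ))
        rw [heq, hFBdef]
        exact Finset.mem_biUnion.2 ⟨j, Finset.mem_univ j, hj⟩
    have hσdecomp : σ = (σ ∩ VA) ∪ (σ ∩ VB) := by
      rw [← Finset.inter_union_distrib_left]
      exact (Finset.inter_eq_left.2 hσsub).symm
    rw [hσdecomp]
    exact hmem_of hσA hσB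
  · -- Pure 3
    refine ⟨hcard4, ?_, ?_⟩
    · obtain ⟨eA, heA, hcA⟩ : ∃ e ∈ FA, e.card = 2 := by
        obtain ⟨e1, he1, -, hc1⟩ := hextA ∅ hemptyA (by simp)
        rw [Finset.card_empty] at hc1
        obtain ⟨e2, he2, -, hc2⟩ := hextA e1 he1 (by omega)
        exact ⟨e2, he2, by omega⟩
      obtain ⟨eB, heB, hcB⟩ : ∃ e ∈ FB, e.card = 2 := by
        obtain ⟨e1, he1, -, hc1⟩ := hextB ∅ hemptyB (by simp)
        rw [Finset.card_empty] at hc1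
        obtain ⟨e2, he2, -, hc2⟩ := hextB e1 he1 (by omega)
        exact ⟨e2, he2, by omega⟩
      refine ⟨eA ∪ eB, hmem_of heA heB, ?_⟩
      rw [Finset.card_union_of_disjoint (hdAB.mono (hFAsub _ heA) (hFBsub _ heB)), hcA, hcB]
    · intro σ hfacet
      have h4 := hcard4 σ hfacet.1
      by_contra hne
      have hlt : σ.card < 4 := by omega
      obtain ⟨τ, hτ, hsub, hcard⟩ := hext σ hfacet.1 hlt
      have heq := hfacet.2 τ hτ hsub
      rw [heq] at hcard
      omega
  · -- links are Eulerian
    intro σ hσ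
    obtain ⟨hτA, hτB, hσeq⟩ := hmem_split σ hσ
    set LA := VA.powerset.filter
      (fun ρ => Disjoint ρ (σ ∩ VA) ∧ ∃ i, ρ ∪ (σ ∩ VA) ∈ (Ca i).faces) with hLAdef
    set LB := VB.powerset.filter
      (fun ρ => Disjoint ρ (σ ∩ VB) ∧ ∃ j, ρ ∪ (σ ∩ VB) ∈ (Cb j).faces) with hLBdef
    have hτA' := hτA
    have hτB' := hτB
    rw [hFAdef] at hτA'
    rw [hFBdef] at hτB'
    obtain ⟨iA, -, hiA⟩ := Finset.mem_biUnion.1 hτA'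
    obtain ⟨jB, -, hjB⟩ := Finset.mem_biUnion.1 hτB'
    have hLAsub : ∀ ρ ∈ LA, ρ ⊆ VA := by
      intro ρ hρ
      rw [hLAdef] at hρ
      exact Finset.mem_powerset.1 (Finset.mem_filter.1 hρ).1
    have hLBsub : ∀ ρ ∈ LB, ρ ⊆ VB := by
      intro ρ hρ
      rw [hLBdef] at hρ
      exact Finset.mem_powerset.1 (Finset.mem_filter.1 hρ).1
    have hemptyLA : ∅ ∈ LA := by
      rw [hLAdef]
      refine Finset.mem_filter.2 ⟨Finset.mem_powerset.2 (Finset.empty_subset _),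
        Finset.disjoint_empty_left _, iA, ?_⟩
      rwa [Finset.empty_union]
    have hemptyLB : ∅ ∈ LB := by
      rw [hLBdef]
      refine Finset.mem_filter.2 ⟨Finset.mem_powerset.2 (Finset.empty_subset _),
        Finset.disjoint_empty_left _, jB, ?_⟩
      rwa [Finset.empty_union]
    have hlink : (Δ.link σ).faces = (LA ×ˢ LB).image fun p => p.1 ∪ p.2 := by
      ext ρ
      show ρ ∈ insert ∅ (Δ.faces.filter fun τ => Disjoint τ σ ∧ τ ∪ σ ∈ Δ.faces) ↔ _
      constructor
      · intro hρ
        rcases Finset.mem_insert.1 hρ with rfl | hρ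
        · exact Finset.mem_image.2 ⟨(∅, ∅), Finset.mem_product.2 ⟨hemptyLA, hemptyLB⟩, by simp⟩
        · obtain ⟨hρf, hdisj, hufc⟩ := Finset.mem_filter.1 hρ
          obtain ⟨hu1, hu2, -⟩ := hmem_split _ hufc
          refine Finset.mem_image.2 ⟨(ρ ∩ VA, ρ ∩ VB), Finset.mem_product.2 ⟨?_, ?_⟩, ?_⟩
          · rw [hLAdef]
            refine Finset.mem_filter.2 ⟨Finset.mem_powerset.2 Finset.inter_subset_right,
              hdisj.mono Finset.inter_subset_left Finset.inter_subset_left, ?_⟩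
            have heqA : (ρ ∩ VA) ∪ (σ ∩ VA) = (ρ ∪ σ) ∩ VA :=
              (Finset.union_inter_distrib_right ρ σ VA).symm
            rw [heqA]
            rw [hFAdef] at hu1
            obtain ⟨i, -, hi⟩ := Finset.mem_biUnion.1 hu1
            exact ⟨i, hi⟩
          · rw [hLBdef]
            refine Finset.mem_filter.2 ⟨Finset.mem_powerset.2 Finset.inter_subset_right,
              hdisj.mono Finset.inter_subset_left Finset.inter_subset_left, ?_⟩
            have heqB : (ρ ∩ VB) ∪ (σ ∩ VB) = (ρ ∪ σ) ∩ VB :=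
              (Finset.union_inter_distrib_right ρ σ VB).symm
            rw [heqB]
            rw [hFBdef] at hu2
            obtain ⟨j, -, hj⟩ := Finset.mem_biUnion.1 hu2
            exact ⟨j, hj⟩
          · show (ρ ∩ VA) ∪ (ρ ∩ VB) = ρ
            rw [← Finset.inter_union_distrib_left]
            exact Finset.inter_eq_left.2 (hsubAB ρ hρf)
      · intro hρ
        obtain ⟨p, hp, rfl⟩ := Finset.mem_image.1 hρ
        rw [Finset.mem_product] at hp
        have hp1 := hp.1
        have hp2 := hp.2
        rw [hLAdef, Finset.mem_filter, Finset.mem_powerset] at hp1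
        rw [hLBdef, Finset.mem_filter, Finset.mem_powerset] at hp2
        obtain ⟨hp1sub, hp1disj, i, hi⟩ := hp1
        obtain ⟨hp2sub, hp2disj, j, hj⟩ := hp2
        have hface : (p.1 ∪ p.2) ∪ σ ∈ Δ.faces := by
          have hrearr : (p.1 ∪ p.2) ∪ σ = (p.1 ∪ (σ ∩ VA)) ∪ (p.2 ∪ (σ ∩ VB)) := by
            conv_lhs => rw [hσeq]
            ac_rfl
          rw [hrearr]
          refine hmem_of ?_ ?_
          · rw [hFAdef]
            exact Finset.mem_biUnion.2 ⟨i, Finset.mem_univ i, hi⟩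
          · rw [hFBdef]
            exact Finset.mem_biUnion.2 ⟨j, Finset.mem_univ j, hj⟩
        have hdisjρσ : Disjoint (p.1 ∪ p.2) σ := by
          conv_rhs => rw [hσeq]
          rw [Finset.disjoint_union_left, Finset.disjoint_union_right,
            Finset.disjoint_union_right]
          exact ⟨⟨hp1disj, hdAB.mono hp1sub Finset.inter_subset_right⟩,
            ⟨(hdAB.symm).mono hp2sub Finset.inter_subset_right, hp2disj⟩⟩
        rcases eq_or_ne (p.1 ∪ p.2) ∅ with heq | hne
        · rw [heq]
          exact Finset.mem_insert_self _ _
        · exact Finset.mem_insert.2 (Or.inr (Finset.mem_filter.2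
            ⟨Δ.down_closed hface Finset.subset_union_left, hdisjρσ, hface⟩))
    have hcsLA : SC.csum LA = (-1 : ℤ) ^ (σ ∩ VA).card := by
      rw [hLAdef, hVAdef]
      exact SC.csum_LA Ca a hCa hs0 hdisja (σ ∩ VA) iA hiA
    have hcsLB : SC.csum LB = (-1 : ℤ) ^ (σ ∩ VB).card := by
      rw [hLBdef, hVBdef]
      exact SC.csum_LA Cb b hCb ht0 hdisjb (σ ∩ VB) jB hjB
    have hσc : σ.card = (σ ∩ VA).card + (σ ∩ VB).card := by
      conv_lhs => rw [hσeq]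
      exact Finset.card_union_of_disjoint
        (hdAB.mono Finset.inter_subset_right Finset.inter_subset_right)
    have hredl : (Δ.link σ).redChar = -(-1 : ℤ) ^ σ.card := by
      rw [SC.redChar_eq, hlink, csum_image_union hdAB hLAsub hLBsub, hcsLA, hcsLB,
        ← pow_add, ← hσc]
    have heven : (-1 : ℤ) ^ (σ.card + σ.card) = 1 := Even.neg_one_pow ⟨σ.card, rfl⟩
    rw [hredl, neg_mul, ← pow_add, heven]
    norm_num
  · -- vertex count
    rw [hVS, Finset.card_union_of_disjoint hdAB, hVAcard, hVBcard]
    omega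
  · -- edge count
    have hEA' : ∀ i, (((Ca i).faces).filter fun σ => σ.card = 2).card = a i := by
      intro i
      rw [(Ca i).edge_count (hCa i).2.1 (hCa i).2.2.1, (hCa i).1]
    have hEB' : ∀ j, (((Cb j).faces).filter fun σ => σ.card = 2).card = b j := by
      intro j
      rw [(Cb j).edge_count (hCb j).2.1 (hCb j).2.2.1, (hCb j).1]
    set EA := FA.filter (fun σ => σ.card = 2) with hEAdef
    set EB := FB.filter (fun σ => σ.card = 2) with hEBdef
    set EM := (VA ×ˢ VB).image (fun p => ({p.1, p.2} : Finset V)) with hEMdef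
    have hdEA : ∀ i ∈ (Finset.univ : Finset (Fin s)), ∀ i' ∈ (Finset.univ : Finset (Fin s)),
        i ≠ i' → Disjoint ((Ca i).faces.filter fun σ => σ.card = 2)
          ((Ca i').faces.filter fun σ => σ.card = 2) := by
      intro i _ i' _ hne
      refine Finset.disjoint_left.2 ?_
      intro e h1 h2
      rw [Finset.mem_filter] at h1 h2
      obtain ⟨x, hx⟩ : e.Nonempty := Finset.card_pos.1 (by rw [h1.2]; norm_num)
      exact Finset.disjoint_left.1 (hdisja i i' hne)
        ((Ca i).face_subset h1.1 hx) ((Ca i').face_subset h2.1 hx)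
    have hdEB : ∀ j ∈ (Finset.univ : Finset (Fin t)), ∀ j' ∈ (Finset.univ : Finset (Fin t)),
        j ≠ j' → Disjoint ((Cb j).faces.filter fun σ => σ.card = 2)
          ((Cb j').faces.filter fun σ => σ.card = 2) := by
      intro j _ j' _ hne
      refine Finset.disjoint_left.2 ?_
      intro e h1 h2
      rw [Finset.mem_filter] at h1 h2
      obtain ⟨x, hx⟩ : e.Nonempty := Finset.card_pos.1 (by rw [h1.2]; norm_num)
      exact Finset.disjoint_left.1 (hdisjb j j' hne)
        ((Cb j).face_subset h1.1 hx) ((Cb j').face_subset h2.1 hx)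
    have hEAcard : EA.card = n / 2 := by
      rw [hEAdef, hFAdef, Finset.filter_biUnion, Finset.card_biUnion hdEA, ← hsa]
      exact Finset.sum_congr rfl fun i _ => hEA' i
    have hEBcard : EB.card = (n + 1) / 2 := by
      rw [hEBdef, hFBdef, Finset.filter_biUnion, Finset.card_biUnion hdEB, ← hsb]
      exact Finset.sum_congr rfl fun j _ => hEB' j
    have hEMcard : EM.card = (n / 2) * ((n + 1) / 2) := by
      rw [hEMdef, Finset.card_image_of_injOn ?inj, Finset.card_product, hVAcard, hVBcard]
      case inj =>
        intro p hp q hq heq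
        rw [Finset.mem_coe, Finset.mem_product] at hp hq
        have heq' : ({p.1, p.2} : Finset V) = {q.1, q.2} := heq
        have h1 : p.1 ∈ ({q.1, q.2} : Finset V) := heq' ▸ Finset.mem_insert_self _ _
        have h2 : p.2 ∈ ({q.1, q.2} : Finset V) :=
          heq' ▸ Finset.mem_insert.2 (Or.inr (Finset.mem_singleton_self _))
        have h1' : p.1 = q.1 := by
          rcases Finset.mem_insert.1 h1 with h | h
          · exact h
          · exfalso
            rw [Finset.mem_singleton] at h
            rw [h] at hp
            exact Finset.disjoint_left.1 hdAB hp.1 hq.2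
        have h2' : p.2 = q.2 := by
          rcases Finset.mem_insert.1 h2 with h | h
          · exfalso
            rw [h] at hp
            exact Finset.disjoint_left.1 hdAB hq.1 hp.2
          · exact Finset.mem_singleton.1 h
        exact Prod.ext h1' h2'
    have hEdecomp : Δ.faces.filter (fun σ => σ.card = 2) = (EA ∪ EB) ∪ EM := by
      ext e
      simp only [Finset.mem_filter, Finset.mem_union]
      constructor
      · rintro ⟨hef, hc2⟩
        obtain ⟨h1, h2, h3⟩ := hmem_split _ hef
        have hdisje : Disjoint (e ∩ VA) (e ∩ VB) :=
          hdAB.mono Finset.inter_subset_right Finset.inter_subset_right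
        have hcsum : e.card = (e ∩ VA).card + (e ∩ VB).card := by
          conv_lhs => rw [h3]
          exact Finset.card_union_of_disjoint hdisje
        have hA2 := hFAcard _ h1
        have hcases : ((e ∩ VA).card = 2 ∧ (e ∩ VB).card = 0) ∨
            ((e ∩ VA).card = 0 ∧ (e ∩ VB).card = 2) ∨
            ((e ∩ VA).card = 1 ∧ (e ∩ VB).card = 1) := by omega
        rcases hcases with ⟨hA, hB⟩ | ⟨hA, hB⟩ | ⟨hA, hB⟩
        · left; left
          rw [Finset.card_eq_zero] at hB
          rw [hB, Finset.union_empty] at h3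
          rw [hEAdef]
          refine Finset.mem_filter.2 ⟨?_, hc2⟩
          rw [h3]
          exact h1
        · left; right
          rw [Finset.card_eq_zero] at hA
          rw [hA, Finset.empty_union] at h3
          rw [hEBdef]
          refine Finset.mem_filter.2 ⟨?_, hc2⟩
          rw [h3]
          exact h2
        · right
          obtain ⟨u, hu⟩ := Finset.card_eq_one.1 hA
          obtain ⟨v, hv⟩ := Finset.card_eq_one.1 hB
          rw [hEMdef]
          refine Finset.mem_image.2 ⟨(u, v), Finset.mem_product.2 ⟨?_, ?_⟩, ?_⟩
          · exact Finset.inter_subset_right (hu ▸ Finset.mem_singleton_self u)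
          · exact Finset.inter_subset_right (hv ▸ Finset.mem_singleton_self v)
          · show ({u, v} : Finset V) = e
            rw [h3, hu, hv, ← Finset.insert_eq]
      · rintro ((h | h) | h)
        · rw [hEAdef, Finset.mem_filter] at h
          refine ⟨?_, h.2⟩
          have := hmem_of h.1 hemptyB
          rwa [Finset.union_empty] at this
        · rw [hEBdef, Finset.mem_filter] at h
          refine ⟨?_, h.2⟩
          have := hmem_of hemptyA h.1
          rwa [Finset.empty_union] at this
        · rw [hEMdef] at h
          obtain ⟨p, hp, rfl⟩ := Finset.mem_image.1 h
          rw [Finset.mem_product] at hp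
          have hne : p.1 ≠ p.2 := fun h' => Finset.disjoint_left.1 hdAB hp.1 (h' ▸ hp.2)
          constructor
          · have := hmem_of (hsingA p.1 hp.1) (hsingB p.2 hp.2)
            rwa [← Finset.insert_eq] at this
          · exact Finset.card_pair hne
    have hd1 : Disjoint EA EB := by
      refine Finset.disjoint_left.2 ?_
      intro e h1 h2
      rw [hEAdef, Finset.mem_filter] at h1
      rw [hEBdef, Finset.mem_filter] at h2
      obtain ⟨x, hx⟩ : e.Nonempty := Finset.card_pos.1 (by rw [h1.2]; norm_num)
      exact Finset.disjoint_left.1 hdAB (hFAsub _ h1.1 hx) (hFBsub _ h2.1 hx)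
    have hd2 : Disjoint (EA ∪ EB) EM := by
      refine Finset.disjoint_right.2 ?_
      intro e he hAB
      rw [hEMdef] at he
      obtain ⟨p, hp, rfl⟩ := Finset.mem_image.1 he
      rw [Finset.mem_product] at hp
      rcases Finset.mem_union.1 hAB with h | h
      · rw [hEAdef, Finset.mem_filter] at h
        have : p.2 ∈ VA := hFAsub _ h.1
          (Finset.mem_insert.2 (Or.inr (Finset.mem_singleton_self _)))
        exact Finset.disjoint_left.1 hdAB this hp.2
      · rw [hEBdef, Finset.mem_filter] at h
        have : p.1 ∈ VB := hFBsub _ h.1 (Finset.mem_insert_self _ _)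
        exact Finset.disjoint_left.1 hdAB hp.1 this
    have hfnum : Δ.fNum 1 = (Δ.faces.filter fun σ => σ.card = 2).card := by
      simp [SC.fNum]
    rw [hfnum, hEdecomp, Finset.card_union_of_disjoint hd2, Finset.card_union_of_disjoint hd1,
      hEAcard, hEBcard, hEMcard]
    rcases Nat.even_or_odd n with ⟨k, hk⟩ | ⟨k, hk⟩
    · subst hk
      have h1 : (k + k) / 2 = k := by omega
      have h2 : (k + k + 1) / 2 = k := by omega
      have h3 : (k + k) ^ 2 / 4 = k * k := by
        have he : (k + k) ^ 2 = 4 * (k * k) := by ring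
        rw [he, Nat.mul_div_cancel_left _ (by norm_num)]
      rw [h1, h2, h3]
      ring
    · subst hk
      have h1 : (2 * k + 1) / 2 = k := by omega
      have h2 : (2 * k + 1 + 1) / 2 = k + 1 := by omega
      have h3 : (2 * k + 1) ^ 2 / 4 = k * k + k := by
        have he : (2 * k + 1) ^ 2 = 4 * (k * k + k) + 1 := by ring
        rw [he]
        omega
      rw [h1, h2, h3]
      ring
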